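/- In a gap-free decision-making mechanism (with perfect information), for any root-to-node decision path v_1,…,v_k, if v_k ∈ win_a(o) and v_k ∉ win_a(ō), then there exist an index i < k and an agent b with v_i ∈ win_b(ō). -/

import Mathlib

inductive Outcome where
  | yes : Outcome
  | no : Outcome
deriving DecidableEq

def Outcome.flip : Outcome → Outcome
  | .yes => .no
  | .no => .yes

/-- A decision-making mechanism (perfect information):
a finite rooted directed tree `(V, E)` with root `root`,
agents `A`, actions `Act`, available-action sets `Δ`,
choice functions `τ`, and a leaf labelling `lab`. -/
structure Mech (V A Act : Type) where
  finV : Fintype V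
  E : V → V → Prop
  root : V
  root_no_parent : ∀ v, ¬ E v root
  unique_parent : ∀ u v w, E u w → E v w → u = v
  reach : ∀ v, Relation.ReflTransGen E root v
  Δ : A → V → Set Act
  Δ_nonempty : ∀ a v, (∃ u, E v u) → (Δ a v).Nonempty
  τ : V → (A → Act) → V
  τ_child : ∀ v δ, (∃ u, E v u) → (∀ b, δ b ∈ Δ b v) → E v (τ v δ)
  lab : V → Outcome

namespace Mech

variable {V A Act : Type}

def IsLeaf (M : Mech V A Act) (v : V) : Prop := ∀ u, ¬ M.E v u

def IsDecision (M : Mech V A Act) (v : V) : Prop := ∃ u, M.E v u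

/-- `Next a d v` : the set of children the process can move to from `v`
when agent `a` chooses action `d`. -/
def Next (M : Mech V A Act) (a : A) (d : Act) (v : V) : Set V :=
  { u | ∃ δ : A → Act, (∀ b, δ b ∈ M.Δ b v) ∧ δ a = d ∧ u = M.τ v δ }

/-- `win_a(o)`: the smallest set containing all leaves labelled `o` and
closed under: if `Next a d v ⊆ win_a(o)` for some available action `d`
at a decision node `v`, then `v ∈ win_a(o)`. -/
inductive Win (M : Mech V A Act) (a : A) (o : Outcome) : V → Prop where
  | leaf (v : V) : M.IsLeaf v → M.lab v = o → Win M a o v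
  | step (v : V) (d : Act) : M.IsDecision v → d ∈ M.Δ a v →
      (∀ u ∈ M.Next a d v, Win M a o u) → Win M a o v

/-- A decision path starting at the root. -/
def RootPath (M : Mech V A Act) (l : List V) : Prop :=
  l.head? = some M.root ∧ l.Chain' M.E

/-- Agent `a` is (counterfactually) responsible at leaf `v`. -/
def Responsible (M : Mech V A Act) (a : A) (v : V) : Prop :=
  ∃ l : List V, M.RootPath l ∧ l.getLast? = some v ∧
    ∃ u ∈ l, M.IsDecision u ∧ M.Win a (M.lab v).flip u

def GapFree (M : Mech V A Act) : Prop :=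
  ∀ v, M.IsLeaf v → ∃ a, M.Responsible a v

def Dictator (M : Mech V A Act) (a : A) (v : V) : Prop :=
  M.Win a Outcome.yes v ∧ M.Win a Outcome.no v

def ElectedDictatorship (M : Mech V A Act) : Prop :=
  ∀ (l : List V) (v : V), M.RootPath l → l.getLast? = some v → M.IsLeaf v →
    ∃ u ∈ l, ∃ a, M.Dictator a u

end Mech

/-- A decision-making mechanism with imperfect information. -/
structure IMech (V A Act : Type) extends Mech V A Act where
  sim : A → V → V → Prop
  sim_equiv : ∀ a, Equivalence (sim a)
  sim_decision : ∀ a u v, sim a u v → ((∃ w, E u w) ↔ (∃ w, E v w))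
  sim_Δ : ∀ a u v, sim a u v → Δ a u = Δ a v

namespace IMech

variable {V A Act : Type}

/-- `Next a d ([v]_a)` : the union of `Next a d u` over all `u ∼_a v`. -/
def NextCl (M : IMech V A Act) (a : A) (d : Act) (v : V) : Set V :=
  { w | ∃ u, M.sim a v u ∧ w ∈ M.toMech.Next a d u }

/-- `ewin_a(o)`. -/
inductive EWin (M : IMech V A Act) (a : A) (o : Outcome) : V → Prop where
  | leaf (v : V) : M.toMech.IsLeaf v → M.lab v = o → EWin M a o v
  | known (v : V) (d : Act) : M.toMech.IsDecision v → d ∈ M.Δ a v →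
      (∀ w ∈ M.NextCl a d v, EWin M a o w) → EWin M a o v
  | blind (v : V) : M.toMech.IsDecision v →
      (∀ d ∈ M.Δ a v, ∀ w ∈ M.toMech.Next a d v, EWin M a o w) → EWin M a o v

/-- `uwin_a(o)`. -/
inductive UWin (M : IMech V A Act) (a : A) (o : Outcome) : V → Prop where
  | leaf (v : V) : M.toMech.IsLeaf v → M.lab v = o → UWin M a o v
  | known (v : V) (d : Act) : M.toMech.IsDecision v → d ∈ M.Δ a v →
      (∀ w ∈ M.NextCl a d v, UWin M a o w) → UWin M a o v

def EpistemicallyResponsible (M : IMech V A Act) (a : A) (v : V) : Prop :=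
  ∃ l : List V, M.toMech.RootPath l ∧ l.getLast? = some v ∧
    ∃ u ∈ l, M.toMech.IsDecision u ∧ M.EWin a (M.lab v).flip u

def EpistemicGapFree (M : IMech V A Act) : Prop :=
  ∀ v, M.toMech.IsLeaf v → ∃ a, M.EpistemicallyResponsible a v

def EpistemicDictator (M : IMech V A Act) (a : A) (v : V) : Prop :=
  M.EWin a Outcome.yes v ∧ M.EWin a Outcome.no v

def ElectedEpistemicDictatorship (M : IMech V A Act) : Prop :=
  ∀ (l : List V) (v : V), M.toMech.RootPath l → l.getLast? = some v →
    M.toMech.IsLeaf v → ∃ u ∈ l, ∃ a, M.EpistemicDictator a u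

def SemiEpistemicDictator (M : IMech V A Act) (a : A) (v : V) : Prop :=
  ∃ o : Outcome, M.EWin a o v ∧ M.toMech.Win a o.flip v

def ElectedSemiEpistemicDictatorship (M : IMech V A Act) : Prop :=
  ∀ (l : List V) (v : V), M.toMech.RootPath l → l.getLast? = some v →
    M.toMech.IsLeaf v → ∃ u ∈ l, ∃ a, M.SemiEpistemicDictator a u

end IMech

section AuxStmt16

variable {V A Act : Type}

/-- Two distinct agents cannot both force opposite outcomes from the same node. -/
theorem Mech.no_double (M : Mech V A Act) {a b : A} (hab : a ≠ b) {o : Outcome} :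
    ∀ {v : V}, M.Win a o v → M.Win b o.flip v → False := by
  intro v h1
  induction h1 with
  | leaf v hlf ho =>
    intro h2
    cases h2 with
    | leaf _ _ ho' =>
      rw [ho] at ho'
      cases o <;> simp [Outcome.flip] at ho'
    | step _ d hdec _ _ => obtain ⟨u, hu⟩ := hdec; exact hlf u hu
  | step v d hdec hd hnext ih =>
    intro h2
    cases h2 with
    | leaf _ hlf _ => obtain ⟨u, hu⟩ := hdec; exact hlf u hu
    | step _ d' _ hd' hnext' =>
      classical
      set δ : A → Act := fun c =>
        if c = a then d else if c = b then d' else (M.Δ_nonempty c v hdec).choose with hδdef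
      have hδ : ∀ c, δ c ∈ M.Δ c v := by
        intro c
        by_cases h1 : c = a
        · subst h1; simpa [hδdef] using hd
        · by_cases h2 : c = b
          · subst h2; simpa [hδdef, h1] using hd'
          · simpa [hδdef, h1, h2] using (M.Δ_nonempty c v hdec).choose_spec
      have hmem : M.τ v δ ∈ M.Next a d v := ⟨δ, hδ, by simp [hδdef], rfl⟩
      have hmem' : M.τ v δ ∈ M.Next b d' v := ⟨δ, hδ, by simp [hδdef, Ne.symm hab], rfl⟩
      exact ih _ hmem (hnext' _ hmem')

/-- From a node where `a` wins for `o` but not for `ō`, there is a path to a leaf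
labelled `o` all of whose nodes are winning for `o` and not winning for `ō`. -/
theorem Mech.descend (M : Mech V A Act) {a : A} {o : Outcome} :
    ∀ {v : V}, M.Win a o v → ¬ M.Win a o.flip v →
      ∃ t : List V, t.head? = some v ∧ t.Chain' M.E ∧
        (∀ x ∈ t, M.Win a o x ∧ ¬ M.Win a o.flip x) ∧
        ∃ u, t.getLast? = some u ∧ M.IsLeaf u ∧ M.lab u = o := by
  intro v h1
  induction h1 with
  | leaf v hlf ho =>
    intro hneg
    exact ⟨[v], rfl, List.isChain_singleton v,
      by simpa using ⟨Mech.Win.leaf v hlf ho, hneg⟩, v, rfl, hlf, ho⟩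
  | step v d hdec hd hnext ih =>
    intro hneg
    have hne : ¬ ∀ u ∈ M.Next a d v, M.Win a o.flip u :=
      fun h => hneg (Mech.Win.step v d hdec hd h)
    push_neg at hne
    obtain ⟨u, hu, hnu⟩ := hne
    obtain ⟨t, hhead, hchain, hprop, w, hlast, hlf, hlab⟩ := ih u hu hnu
    obtain ⟨δ, hδ, -, hτ⟩ := hu
    have hE : M.E v u := hτ ▸ M.τ_child v δ hdec hδ
    have htne : t ≠ [] := by intro h; rw [h] at hhead; simp at hhead
    refine ⟨v :: t, rfl, ?_, ?_, w, ?_, hlf, hlab⟩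
    · rw [List.Chain', List.isChain_cons]
      exact ⟨fun y hy => by rw [hhead] at hy; cases hy; exact hE, hchain⟩
    · intro x hx
      rcases List.mem_cons.mp hx with rfl | hx
      · exact ⟨Mech.Win.step x d hdec hd hnext, hneg⟩
      · exact hprop x hx
    · cases t with
      | nil => exact absurd rfl htne
      | cons y t' => rw [List.getLast?_cons_cons]; exact hlast

theorem Mech.rootPath_concat (M : Mech V A Act) {l : List V} {x : V}
    (h : M.RootPath (l ++ [x])) (hne : l ≠ []) :
    M.RootPath l ∧ ∃ y, l.getLast? = some y ∧ M.E y x := by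
  obtain ⟨hh, hc⟩ := h
  rw [List.Chain', List.isChain_append] at hc
  obtain ⟨hc1, -, hc2⟩ := hc
  obtain ⟨y, hy⟩ := Option.isSome_iff_exists.mp (List.getLast?_isSome.mpr hne)
  refine ⟨⟨?_, hc1⟩, y, hy, hc2 y hy x rfl⟩
  cases l with
  | nil => exact absurd rfl hne
  | cons z l0 => simpa using hh

/-- Root paths with the same last node are equal. -/
theorem Mech.rootPath_unique (M : Mech V A Act) (l1 : List V) :
    ∀ (l2 : List V) (x : V), M.RootPath l1 → M.RootPath l2 →
      l1.getLast? = some x → l2.getLast? = some x → l1 = l2 := by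
  induction l1 using List.reverseRecOn with
  | nil => intro l2 x _ _ h; simp at h
  | append_singleton l1 x1 ih =>
    intro l2 x hr1 hr2 hl1 hl2
    have hx1 : x1 = x := by simpa using hl1
    rw [hx1] at hr1 ⊢
    induction l2 using List.reverseRecOn with
    | nil => simp at hl2
    | append_singleton l2 y2 _ =>
      have hy2 : y2 = x := by simpa using hl2
      rw [hy2] at hr2 ⊢
      cases l1 with
      | nil =>
        have hroot : x = M.root := by simpa using hr1.1
        cases l2 with
        | nil => rfl
        | cons z l2' =>
          exfalso
          obtain ⟨-, y, -, hEy⟩ := M.rootPath_concat hr2 (by simp)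
          rw [hroot] at hEy
          exact M.root_no_parent y hEy
      | cons z l1' =>
        cases l2 with
        | nil =>
          exfalso
          have hroot : x = M.root := by simpa using hr2.1
          obtain ⟨-, y, -, hEy⟩ := M.rootPath_concat hr1 (by simp)
          rw [hroot] at hEy
          exact M.root_no_parent y hEy
        | cons w l2' =>
          obtain ⟨hrp1, y1, hy1, hE1⟩ := M.rootPath_concat hr1 (by simp)
          obtain ⟨hrp2, y2', hy2', hE2⟩ := M.rootPath_concat hr2 (by simp)
          have heq : y1 = y2' := M.unique_parent y1 y2' x hE1 hE2
          subst heq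
          rw [ih (w :: l2') y1 hrp1 hrp2 hy1 hy2']

end AuxStmt16

theorem stmt16 {V A Act : Type} (M : Mech V A Act)
    (hgf : M.GapFree) (a : A) (o : Outcome)
    (l : List V) (vk : V) (hl : M.RootPath l) (hlast : l.getLast? = some vk)
    (h1 : M.Win a o vk) (h2 : ¬ M.Win a o.flip vk) :
    ∃ i : ℕ, ∃ hi : i + 1 < l.length, ∃ b : A,
      M.Win b o.flip (l.get ⟨i, Nat.lt_of_succ_lt hi⟩) := by
  classical
  obtain ⟨t, hthead, htchain, htprop, u, htlast, hulf, hulab⟩ := M.descend h1 h2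
  obtain ⟨t', rfl⟩ : ∃ t', t = vk :: t' := by
    cases t with
    | nil => simp at hthead
    | cons y t' =>
      have : y = vk := by simpa using hthead
      exact ⟨t', by rw [this]⟩
  have hlne : l ≠ [] := by intro h; rw [h] at hlast; simp at hlast
  have hplast : (l ++ t').getLast? = some u := by
    cases t' with
    | nil =>
      have : u = vk := by simpa using htlast.symm
      simpa [this] using hlast
    | cons y t'' =>
      rw [List.getLast?_append]
      rw [List.getLast?_cons_cons] at htlast
      rw [htlast]; rfl
  have hprp : M.RootPath (l ++ t') := by
    constructor
    · cases l with
      | nil => exact absurd rfl hlne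
      | cons z l0 => simpa using hl.1
    · rw [List.Chain', List.isChain_append]
      refine ⟨hl.2, htchain.tail, ?_⟩
      intro y hy z hz
      rw [hlast] at hy
      cases hy
      exact (List.isChain_cons.mp htchain).1 z hz
  obtain ⟨b, l', hrp', hlast', w, hwmem, hwdec, hwwin⟩ := hgf u hulf
  rw [hulab] at hwwin
  have hleq : l' = l ++ t' := M.rootPath_unique l' (l ++ t') u hrp' hprp hlast' hplast
  subst hleq
  have hwnott : w ∉ (vk :: t') := by
    intro hwt
    obtain ⟨hwo, hwno⟩ := htprop w hwt
    by_cases hba : b = a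
    · subst hba; exact hwno hwwin
    · exact M.no_double (Ne.symm hba) hwo hwwin
  have hwl : w ∈ l := by
    rcases List.mem_append.mp hwmem with h | h
    · exact h
    · exact absurd (List.mem_cons_of_mem _ h) hwnott
  have hwne : w ≠ vk := fun h => hwnott (h ▸ List.mem_cons_self)
  obtain ⟨⟨i, hi⟩, hget⟩ := List.mem_iff_get.mp hwl
  have hi1 : i + 1 < l.length := by
    rcases Nat.lt_or_ge (i + 1) l.length with h | h
    · exact h
    · exfalso
      have hgl : vk = l.getLast hlne := by
        have h' := List.getLast?_eq_getLast (l := l) hlne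
        rw [hlast] at h'
        exact Option.some.inj h'
      have hgv : l.get ⟨i, hi⟩ = l.getLast hlne := by
        rw [List.getLast_eq_getElem, List.get_eq_getElem]
        congr 1
        simp only [Fin.val_mk]; omega
      exact hwne (by rw [← hget, hgv, ← hgl])
  exact ⟨i, hi1, b, hget ▸ hwwin⟩
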